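/- Let Ω ⊆ ℝ^d be open and bounded, p ∈ (1,∞), and (μ,f), (ν,g) ∈ TL^p. Let μ̃ = (Id × f)_* μ and ν̃ = (Id × g)_* ν be the pushforward measures on Λ = Ω × ℝ^m supported on the graphs of f and g. Then d_TLp^p((μ,f),(ν,g)) = inf_{π̃ ∈ Π(μ̃,ν̃)} ∫_{Λ×Λ} |𝐱 − 𝐲|_p^p dπ̃(𝐱,𝐲) = d_Wp^p(μ̃, ν̃); that is, the TL^p distance equals the p-Wasserstein distance between the lifted measures on the graphs. -/

import Mathlib

open MeasureTheory Filter Topology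

/-- `∑ i, |v i|^p`, the p-th power of the ℓ^p norm on ℝ^k. -/
noncomputable def lpPow (p : ℝ) {k : ℕ} (v : Fin k → ℝ) : ℝ := ∑ i, |v i| ^ p

/-- `π` is a coupling (transport plan) between `μ` and `ν`. -/
def IsCoupling {α β : Type*} [MeasurableSpace α] [MeasurableSpace β]
    (π : Measure (α × β)) (μ : Measure α) (ν : Measure β) : Prop :=
  π.map Prod.fst = μ ∧ π.map Prod.snd = ν

/-- The Kantorovich optimal transport cost for a cost function `c`. -/
noncomputable def OTCost {α β : Type*} [MeasurableSpace α] [MeasurableSpace β]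
    (c : α → β → ℝ) (μ : Measure α) (ν : Measure β) : ℝ :=
  ⨅ π : {π : Measure (α × β) // IsCoupling π μ ν},
    ∫ z, c z.1 z.2 ∂(π : Measure (α × β))

/-- The TL^p distance between `(μ, f)` and `(ν, g)`. -/
noncomputable def dTLp (p : ℝ) {d m : ℕ} (μ ν : Measure (Fin d → ℝ))
    (f g : (Fin d → ℝ) → Fin m → ℝ) : ℝ :=
  (OTCost (fun x y => lpPow p (x - y) + lpPow p (f x - g y)) μ ν) ^ (1 / p)

/-- The p-Wasserstein distance on `Λ = ℝ^d × ℝ^m`, for the ℓ^p ground cost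
`|𝐱 − 𝐲|_p^p = |x₁ − y₁|_p^p + |x₂ − y₂|_p^p`. -/
noncomputable def dWpProd (p : ℝ) {d m : ℕ}
    (α β : Measure ((Fin d → ℝ) × (Fin m → ℝ))) : ℝ :=
  (OTCost (fun a b => lpPow p (a.1 - b.1) + lpPow p (a.2 - b.2)) α β) ^ (1 / p)

lemma lpPow_meas (p : ℝ) {k : ℕ} : Measurable (lpPow p (k := k)) :=
  Finset.measurable_sum _ fun i _ => ((measurable_pi_apply i).abs).pow_const p

lemma lpPow_nonneg (p : ℝ) {k : ℕ} (v : Fin k → ℝ) : 0 ≤ lpPow p v :=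
  Finset.sum_nonneg fun i _ => Real.rpow_nonneg (abs_nonneg _) p

lemma OTCost_le {α β : Type*} [MeasurableSpace α] [MeasurableSpace β]
    {c : α → β → ℝ} (hc : ∀ a b, 0 ≤ c a b) {μ : Measure α} {ν : Measure β}
    {π : Measure (α × β)} (hπ : IsCoupling π μ ν) :
    OTCost c μ ν ≤ ∫ z, c z.1 z.2 ∂π := by
  have bdd : BddBelow (Set.range fun π : {π : Measure (α × β) // IsCoupling π μ ν} =>
      ∫ z, c z.1 z.2 ∂(π : Measure (α × β))) := by
    refine ⟨0, ?_⟩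
    rintro x ⟨π', rfl⟩
    exact integral_nonneg fun z => hc _ _
  exact ciInf_le bdd ⟨π, hπ⟩

lemma OTCost_nonneg {α β : Type*} [MeasurableSpace α] [MeasurableSpace β]
    {c : α → β → ℝ} (hc : ∀ a b, 0 ≤ c a b) (μ : Measure α) (ν : Measure β) :
    0 ≤ OTCost c μ ν :=
  Real.iInf_nonneg fun _ => integral_nonneg fun _ => hc _ _

lemma OTCost_lift {d m : ℕ} (p : ℝ) (μ ν : Measure (Fin d → ℝ))
    [IsProbabilityMeasure μ] [IsProbabilityMeasure ν]
    (f g : (Fin d → ℝ) → Fin m → ℝ) (hf : Measurable f) (hg : Measurable g) :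
    OTCost (fun x y => lpPow p (x - y) + lpPow p (f x - g y)) μ ν
      = OTCost (fun a b : (Fin d → ℝ) × (Fin m → ℝ) => lpPow p (a.1 - b.1) + lpPow p (a.2 - b.2))
          (μ.map (fun x => (x, f x))) (ν.map (fun x => (x, g x))) := by
  set Λ := (Fin d → ℝ) × (Fin m → ℝ)
  set c : (Fin d → ℝ) → (Fin d → ℝ) → ℝ :=
    fun x y => lpPow p (x - y) + lpPow p (f x - g y) with hc
  set c' : Λ → Λ → ℝ :=
    fun a b => lpPow p (a.1 - b.1) + lpPow p (a.2 - b.2) with hc'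
  have hcpos : ∀ a b, 0 ≤ c a b := fun a b => add_nonneg (lpPow_nonneg _ _) (lpPow_nonneg _ _)
  have hc'pos : ∀ a b, 0 ≤ c' a b := fun a b => add_nonneg (lpPow_nonneg _ _) (lpPow_nonneg _ _)
  have hF : Measurable (fun x : Fin d → ℝ => (x, f x)) := measurable_id.prodMk hf
  have hG : Measurable (fun x : Fin d → ℝ => (x, g x)) := measurable_id.prodMk hg
  set μt := μ.map (fun x => (x, f x)) with hμt
  set νt := ν.map (fun x => (x, g x)) with hνt
  have hcm : Measurable (fun z : (Fin d → ℝ) × (Fin d → ℝ) => c z.1 z.2) := by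
    apply Measurable.add
    · exact (lpPow_meas p).comp (measurable_fst.sub measurable_snd)
    · exact (lpPow_meas p).comp ((hf.comp measurable_fst).sub (hg.comp measurable_snd))
  have hc'm : Measurable (fun z : Λ × Λ => c' z.1 z.2) := by
    apply Measurable.add
    · exact (lpPow_meas p).comp ((measurable_fst.fst).sub (measurable_snd.fst))
    · exact (lpPow_meas p).comp ((measurable_fst.snd).sub (measurable_snd.snd))
  have hne1 : Nonempty {π : Measure ((Fin d → ℝ) × (Fin d → ℝ)) // IsCoupling π μ ν} := by
    refine ⟨⟨μ.prod ν, ?_, ?_⟩⟩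
    · simp [Measure.map_fst_prod]
    · simp [Measure.map_snd_prod]
  have hμtp : IsProbabilityMeasure μt := Measure.isProbabilityMeasure_map hF.aemeasurable
  have hνtp : IsProbabilityMeasure νt := Measure.isProbabilityMeasure_map hG.aemeasurable
  have hne2 : Nonempty {π : Measure (Λ × Λ) // IsCoupling π μt νt} := by
    refine ⟨⟨μt.prod νt, ?_, ?_⟩⟩
    · simp [Measure.map_fst_prod]
    · simp [Measure.map_snd_prod]
  refine le_antisymm (le_ciInf fun πb => ?_) (le_ciInf fun π => ?_)
  · -- backward direction: OTCost c μ ν ≤ ∫ c' dπb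
    obtain ⟨πb, hπb1, hπb2⟩ := πb
    set G : Λ × Λ → (Fin d → ℝ) × (Fin d → ℝ) := fun z => (z.1.1, z.2.1) with hGdef
    have hGm : Measurable G := (measurable_fst.fst).prodMk (measurable_snd.fst)
    have hcoup : IsCoupling (πb.map G) μ ν := by
      constructor
      · rw [Measure.map_map measurable_fst hGm]
        have h1 : (Prod.fst ∘ G) = (Prod.fst ∘ (Prod.fst : Λ × Λ → Λ)) := rfl
        rw [h1, ← Measure.map_map measurable_fst measurable_fst, hπb1, hμt,
          Measure.map_map measurable_fst hF]
        simp [Function.comp_def]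
      · rw [Measure.map_map measurable_snd hGm]
        have h1 : (Prod.snd ∘ G) = (Prod.fst ∘ (Prod.snd : Λ × Λ → Λ)) := rfl
        rw [h1, ← Measure.map_map measurable_fst measurable_snd, hπb2, hνt,
          Measure.map_map measurable_fst hG]
        simp [Function.comp_def]
    -- a.e. statements: πb lives on graph × graph
    have hgr1 : ∀ᵐ z ∂πb, (z : Λ × Λ).1.2 = f z.1.1 := by
      have hS : MeasurableSet {a : Λ | a.2 = f a.1} :=
        measurableSet_eq_fun measurable_snd (hf.comp measurable_fst)
      have : πb (Prod.fst ⁻¹' {a : Λ | a.2 = f a.1}ᶜ) = 0 := by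
        rw [← Measure.map_apply measurable_fst hS.compl, hπb1, hμt,
          Measure.map_apply hF hS.compl]
        have he : (fun x => (x, f x)) ⁻¹' {a : Λ | a.2 = f a.1}ᶜ = ∅ := by
          ext x; exact ⟨fun hx => (hx rfl).elim, fun h => h.elim⟩
        exact (congrArg μ he).trans measure_empty
      rw [ae_iff]
      exact this
    have hgr2 : ∀ᵐ z ∂πb, (z : Λ × Λ).2.2 = g z.2.1 := by
      have hS : MeasurableSet {a : Λ | a.2 = g a.1} :=
        measurableSet_eq_fun measurable_snd (hg.comp measurable_fst)
      have : πb (Prod.snd ⁻¹' {a : Λ | a.2 = g a.1}ᶜ) = 0 := by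
        rw [← Measure.map_apply measurable_snd hS.compl, hπb2, hνt,
          Measure.map_apply hG hS.compl]
        have he : (fun x => (x, g x)) ⁻¹' {a : Λ | a.2 = g a.1}ᶜ = ∅ := by
          ext x; exact ⟨fun hx => (hx rfl).elim, fun h => h.elim⟩
        exact (congrArg ν he).trans measure_empty
      rw [ae_iff]
      exact this
    have hint : ∫ z, c z.1 z.2 ∂(πb.map G) = ∫ z, c' z.1 z.2 ∂πb := by
      rw [integral_map hGm.aemeasurable hcm.aestronglyMeasurable]
      refine integral_congr_ae ?_
      filter_upwards [hgr1, hgr2] with z h1 h2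
      simp only [hc, hc', hGdef, h1, h2]
    calc OTCost c μ ν ≤ ∫ z, c z.1 z.2 ∂(πb.map G) := OTCost_le hcpos hcoup
      _ = ∫ z, c' z.1 z.2 ∂πb := hint
  · -- forward direction: OTCost c' μt νt ≤ ∫ c dπ
    obtain ⟨π, hπ1, hπ2⟩ := π
    set F : (Fin d → ℝ) × (Fin d → ℝ) → Λ × Λ := fun z => ((z.1, f z.1), (z.2, g z.2)) with hFdef
    have hFm : Measurable F :=
      ((measurable_fst.prodMk (hf.comp measurable_fst)).prodMk
        (measurable_snd.prodMk (hg.comp measurable_snd)))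
    have hcoup : IsCoupling (π.map F) μt νt := by
      constructor
      · rw [Measure.map_map measurable_fst hFm]
        have h1 : (Prod.fst ∘ F) = ((fun x => (x, f x)) ∘ Prod.fst) := rfl
        rw [h1, ← Measure.map_map hF measurable_fst, hπ1]
      · rw [Measure.map_map measurable_snd hFm]
        have h1 : (Prod.snd ∘ F) = ((fun x => (x, g x)) ∘ Prod.snd) := rfl
        rw [h1, ← Measure.map_map hG measurable_snd, hπ2]
    have hint : ∫ z, c' z.1 z.2 ∂(π.map F) = ∫ z, c z.1 z.2 ∂π := by
      rw [integral_map hFm.aemeasurable hc'm.aestronglyMeasurable]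
    calc OTCost c' μt νt ≤ ∫ z, c' z.1 z.2 ∂(π.map F) := OTCost_le hc'pos hcoup
      _ = ∫ z, c z.1 z.2 ∂π := hint


lemma rpow_inv_rpow_self {x p : ℝ} (hx : 0 ≤ x) (hp : p ≠ 0) : (x ^ (1/p)) ^ p = x := by
  rw [← Real.rpow_mul hx, one_div_mul_cancel hp, Real.rpow_one]

/-- the TL^p distance equals the p-Wasserstein distance between the
lifted measures `μ̃ = (Id × f)_*μ` and `ν̃ = (Id × g)_*ν` on the graphs of `f` and `g`. -/
theorem tlp_eq_wasserstein_on_graphs {d m : ℕ} (Ω : Set (Fin d → ℝ)) (hΩo : IsOpen Ω)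
    (hΩb : Bornology.IsBounded Ω) (p : ℝ) (hp1 : 1 < p)
    (μ ν : Measure (Fin d → ℝ)) (f g : (Fin d → ℝ) → Fin m → ℝ)
    (hμ : IsProbabilityMeasure μ) (hν : IsProbabilityMeasure ν)
    (hμΩ : μ Ωᶜ = 0) (hνΩ : ν Ωᶜ = 0)
    (hf : Measurable f) (hg : Measurable g)
    (hfLp : MemLp f (ENNReal.ofReal p) μ) (hgLp : MemLp g (ENNReal.ofReal p) ν) :
    dTLp p μ ν f g ^ p
      = OTCost (fun a b => lpPow p (a.1 - b.1) + lpPow p (a.2 - b.2))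
          (μ.map (fun x => (x, f x))) (ν.map (fun x => (x, g x))) ∧
    dTLp p μ ν f g ^ p
      = dWpProd p (μ.map (fun x => (x, f x))) (ν.map (fun x => (x, g x))) ^ p := by
  have hp0 : p ≠ 0 := by positivity
  have hpos : ∀ (a b : ℝ), (0:ℝ) ≤ 0 := fun _ _ => le_refl 0
  have h1 : dTLp p μ ν f g ^ p
      = OTCost (fun x y => lpPow p (x - y) + lpPow p (f x - g y)) μ ν := by
    unfold dTLp
    exact rpow_inv_rpow_self
      (OTCost_nonneg (fun a b => add_nonneg (lpPow_nonneg _ _) (lpPow_nonneg _ _)) μ ν) hp0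
  have hkey := OTCost_lift p μ ν f g hf hg
  refine ⟨h1.trans hkey, ?_⟩
  have h2 : dWpProd p (μ.map (fun x => (x, f x))) (ν.map (fun x => (x, g x))) ^ p
      = OTCost (fun a b : (Fin d → ℝ) × (Fin m → ℝ) => lpPow p (a.1 - b.1) + lpPow p (a.2 - b.2))
          (μ.map (fun x => (x, f x))) (ν.map (fun x => (x, g x))) := by
    unfold dWpProd
    exact rpow_inv_rpow_self
      (OTCost_nonneg (fun a b => add_nonneg (lpPow_nonneg _ _) (lpPow_nonneg _ _)) _ _) hp0
  rw [h2]
  exact h1.trans hkey
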